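/- Let α, β ∈ S_n with αβ = βα. Then there exists γ ∈ S_n such that γ⁻¹αγ = α⁻¹ and γ⁻¹βγ = β⁻¹. -/

import Mathlib

open MulAction

/-- In a commutative group action, if `a • y = b • y` then `a⁻¹ • y = b⁻¹ • y`. -/
lemma abel_inv_smul {G X : Type*} [CommGroup G] [MulAction G X]
    (a b : G) (y : X) (hab : a • y = b • y) : a⁻¹ • y = b⁻¹ • y := by
  have h1 : (a⁻¹ * b) • y = y := by
    rw [mul_smul, ← hab, inv_smul_smul]
  have h2 : (b * a⁻¹) • y = y := by rw [mul_comm]; exact h1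
  have h3 : a⁻¹ = b⁻¹ * (b * a⁻¹) := by group
  rw [h3, mul_smul, h2]

/-- A finite set with a commutative group action admits a permutation conjugating
every acting element to its inverse. -/
lemma key_lemma {G X : Type*} [CommGroup G] [Fintype X] [DecidableEq X] [MulAction G X] :
    ∃ γ : Equiv.Perm X, ∀ (g : G) (x : X), γ (g • x) = g⁻¹ • γ x := by
  classical
  set s : Setoid X := MulAction.orbitRel G X with hs
  set r : X → X := fun x => (Quotient.mk s x).out with hrdef
  have hr : ∀ x, ∃ g : G, g • (r x) = x := by
    intro x
    have hmem : r x ∈ orbit G x := Quotient.mk_out x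
    obtain ⟨g, hg⟩ := hmem
    exact ⟨g⁻¹, by rw [← hg, inv_smul_smul]⟩
  choose gg hgg using hr
  have hrs : ∀ (g : G) (x : X), r (g • x) = r x := by
    intro g x
    have : Quotient.mk s (g • x) = Quotient.mk s x := by
      exact Quotient.sound ⟨g, rfl⟩
    simp only [hrdef, this]
  set f : X → X := fun x => (gg x)⁻¹ • r x with hfdef
  have hf : ∀ (g : G) (x : X), f (g • x) = g⁻¹ • f x := by
    intro g x
    have h1 : gg (g • x) • r x = (g * gg x) • r x := by
      rw [mul_smul, hgg x, ← hrs g x, hgg (g • x)]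
    have h2 : (gg (g • x))⁻¹ • r x = (g * gg x)⁻¹ • r x :=
      abel_inv_smul _ _ _ h1
    calc f (g • x) = (gg (g • x))⁻¹ • r (g • x) := rfl
      _ = (g * gg x)⁻¹ • r x := by rw [hrs g x, h2]
      _ = (g⁻¹ * (gg x)⁻¹) • r x := by rw [mul_inv_rev, mul_comm]
      _ = g⁻¹ • f x := by rw [mul_smul]
  have hmkr : ∀ x, Quotient.mk s (f x) = Quotient.mk s x := by
    intro x
    have h1 : Quotient.mk s (f x) = Quotient.mk s (r x) := by
      exact Quotient.sound ⟨(gg x)⁻¹, rfl⟩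
    rw [h1, hrdef]
    exact Quotient.out_eq _
  have hinj : Function.Injective f := by
    intro x y hxy
    have hq : Quotient.mk s x = Quotient.mk s y := by
      rw [← hmkr x, ← hmkr y, hxy]
    have hrxy : r x = r y := by simp only [hrdef, hq]
    have h1 : (gg x)⁻¹ • r x = (gg y)⁻¹ • r x := by
      calc (gg x)⁻¹ • r x = f x := rfl
        _ = f y := hxy
        _ = (gg y)⁻¹ • r y := rfl
        _ = (gg y)⁻¹ • r x := by rw [hrxy]
    have h2 : ((gg x)⁻¹)⁻¹ • r x = ((gg y)⁻¹)⁻¹ • r x := abel_inv_smul _ _ _ h1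
    rw [inv_inv, inv_inv] at h2
    rw [← hgg x, ← hgg y, ← hrxy, h2]
  refine ⟨Equiv.ofBijective f (Finite.injective_iff_bijective.mp hinj), ?_⟩
  intro g x
  exact hf g x

/-- Lemma 2.4 (Neftin): commuting permutations can be simultaneously conjugated
to their inverses. -/
theorem stmt_5 {n : ℕ} (α β : Equiv.Perm (Fin n)) (h : α * β = β * α) :
    ∃ γ : Equiv.Perm (Fin n), γ⁻¹ * α * γ = α⁻¹ ∧ γ⁻¹ * β * γ = β⁻¹ := by
  classical
  have hc : Commute α β := h
  set φ : Multiplicative (ℤ × ℤ) →* Equiv.Perm (Fin n) :=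
    MonoidHom.mk' (fun g => α ^ (Multiplicative.toAdd g).1 * β ^ (Multiplicative.toAdd g).2)
      (by
        intro a b
        simp only [toAdd_mul, Prod.fst_add, Prod.snd_add]
        rw [zpow_add, zpow_add]
        exact (hc.zpow_zpow _ _).mul_mul_mul_comm _ _) with hφ
  letI : MulAction (Multiplicative (ℤ × ℤ)) (Fin n) := MulAction.compHom _ φ
  obtain ⟨γ, hγ⟩ := key_lemma (G := Multiplicative (ℤ × ℤ)) (X := Fin n)
  have hsmul : ∀ (g : Multiplicative (ℤ × ℤ)) (x : Fin n), g • x = φ g x := fun _ _ => rfl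
  set ga : Multiplicative (ℤ × ℤ) := Multiplicative.ofAdd (1, 0) with hga
  set gb : Multiplicative (ℤ × ℤ) := Multiplicative.ofAdd (0, 1) with hgb
  have hφa : ∀ x, φ ga x = α x := by intro x; simp [hga, hφ]
  have hφa' : ∀ x, φ ga⁻¹ x = α⁻¹ x := by
    intro x; rw [map_inv]
    have : φ ga = α := Equiv.ext hφa
    rw [this]
  have hφb : ∀ x, φ gb x = β x := by intro x; simp [hgb, hφ]
  have hφb' : ∀ x, φ gb⁻¹ x = β⁻¹ x := by
    intro x; rw [map_inv]
    have : φ gb = β := Equiv.ext hφb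
    rw [this]
  refine ⟨γ, ?_, ?_⟩
  · apply Equiv.Perm.ext; intro x
    have h1 : γ (ga⁻¹ • x) = ga • γ x := by rw [hγ ga⁻¹ x, inv_inv]
    simp only [Equiv.Perm.mul_apply]
    calc γ⁻¹ (α (γ x)) = γ⁻¹ (φ ga (γ x)) := by rw [hφa]
      _ = γ⁻¹ (ga • γ x) := by rw [hsmul]
      _ = γ⁻¹ (γ (ga⁻¹ • x)) := by rw [h1]
      _ = ga⁻¹ • x := Equiv.symm_apply_apply _ _
      _ = φ ga⁻¹ x := hsmul _ _
      _ = α⁻¹ x := hφa' x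
  · apply Equiv.Perm.ext; intro x
    have h1 : γ (gb⁻¹ • x) = gb • γ x := by rw [hγ gb⁻¹ x, inv_inv]
    simp only [Equiv.Perm.mul_apply]
    calc γ⁻¹ (β (γ x)) = γ⁻¹ (φ gb (γ x)) := by rw [hφb]
      _ = γ⁻¹ (gb • γ x) := by rw [hsmul]
      _ = γ⁻¹ (γ (gb⁻¹ • x)) := by rw [h1]
      _ = gb⁻¹ • x := Equiv.symm_apply_apply _ _
      _ = φ gb⁻¹ x := hsmul _ _
      _ = β⁻¹ x := hφb' x
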